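/- Let a_k = k!/|k|! and b_k = k^k/|k|^{|k|} for k ∈ ℤ₊ⁿ (with the conventions 0⁰ = 1 and the empty product equal to 1). Then (a_k/b_k)^{1/|k|} → 1 as |k| → ∞. -/

import Mathlib

open Finset Real Filter Topology


lemma aux_exp_le (k : ℕ) (hk : 1 ≤ k) : Real.exp 1 * (k:ℝ)^(k+1) ≤ ((k:ℝ)+1)^(k+1) := by
  have hk0 : (0:ℝ) < k := by exact_mod_cast hk
  have h1 : Real.exp (1/((k:ℝ)+1)) ≤ ((k:ℝ)+1)/k := by
    have ha := Real.add_one_le_exp (-(1/((k:ℝ)+1)))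
    have hpos : (0:ℝ) < 1 - 1/((k:ℝ)+1) := by
      rw [sub_pos, div_lt_one (by positivity)]; linarith
    have h2 : Real.exp (1/((k:ℝ)+1)) ≤ (1 - 1/((k:ℝ)+1))⁻¹ := by
      rw [le_inv_comm₀ (Real.exp_pos _) hpos, ← Real.exp_neg]
      linarith
    have he2 : 1 - 1/((k:ℝ)+1) = (k:ℝ)/((k:ℝ)+1) := by field_simp; ring
    have he : (1 - 1/((k:ℝ)+1))⁻¹ = ((k:ℝ)+1)/k := by rw [he2, inv_div]
    rwa [he] at h2
  have h3 : (Real.exp (1/((k:ℝ)+1)))^(k+1) ≤ (((k:ℝ)+1)/k)^(k+1) :=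
    pow_le_pow_left₀ (Real.exp_pos _).le h1 _
  have h4 : (Real.exp (1/((k:ℝ)+1)))^(k+1) = Real.exp 1 := by
    rw [← Real.exp_nat_mul]
    congr 1
    push_cast
    field_simp
  rw [h4, div_pow] at h3
  calc Real.exp 1 * (k:ℝ)^(k+1) ≤ (((k:ℝ)+1)^(k+1)/(k:ℝ)^(k+1)) * (k:ℝ)^(k+1) :=
        mul_le_mul_of_nonneg_right h3 (by positivity)
    _ = ((k:ℝ)+1)^(k+1) := by field_simp

lemma aux_one_add_le (k : ℕ) (hk : 1 ≤ k) : ((k:ℝ)+1)^k ≤ Real.exp 1 * (k:ℝ)^k := by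
  have hk0 : (0:ℝ) < k := by exact_mod_cast hk
  have h1 : (1:ℝ) + 1/k ≤ Real.exp (1/k) := by
    have := Real.add_one_le_exp (1/(k:ℝ)); linarith
  have h3 : ((1:ℝ) + 1/k)^k ≤ (Real.exp (1/k))^k := pow_le_pow_left₀ (by positivity) h1 _
  have h4 : (Real.exp (1/(k:ℝ)))^k = Real.exp 1 := by
    rw [← Real.exp_nat_mul]
    congr 1
    field_simp
  rw [h4] at h3
  have h5 : ((k:ℝ)+1)^k = ((1:ℝ)+1/k)^k * (k:ℝ)^k := by
    rw [← mul_pow]; congr 1; field_simp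
  rw [h5]
  exact mul_le_mul_of_nonneg_right h3 (by positivity)

lemma fact_lower (k : ℕ) : (k:ℝ)^k ≤ Real.exp k * (Nat.factorial k) := by
  induction k with
  | zero => simp
  | succ m ih =>
    have hfac : (Nat.factorial (m+1) : ℝ) = ((m:ℝ)+1) * m.factorial := by
      rw [Nat.factorial_succ]; push_cast; ring
    have hexp : Real.exp ((m:ℕ)+1:ℝ) = Real.exp 1 * Real.exp m := by
      rw [← Real.exp_add]; ring_nf
    rcases Nat.eq_zero_or_pos m with hm | hm
    · subst hm
      norm_num

    · have h2 : ((m:ℝ)+1)^m ≤ Real.exp 1 * (m:ℝ)^m := aux_one_add_le m hm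
      have hfp : (0:ℝ) < m.factorial := by exact_mod_cast m.factorial_pos
      push_cast [hfac, hexp]
      have step1 : ((m:ℝ)+1)^(m+1) = ((m:ℝ)+1) * ((m:ℝ)+1)^m := by ring
      rw [step1]
      calc ((m:ℝ)+1) * ((m:ℝ)+1)^m ≤ ((m:ℝ)+1) * (Real.exp 1 * (m:ℝ)^m) :=
            mul_le_mul_of_nonneg_left h2 (by positivity)
        _ ≤ ((m:ℝ)+1) * (Real.exp 1 * (Real.exp m * m.factorial)) := by
            have := mul_le_mul_of_nonneg_left ih (Real.exp_pos 1).le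
            apply mul_le_mul_of_nonneg_left _ (by positivity)
            linarith
        _ = Real.exp 1 * Real.exp m * (((m:ℝ)+1) * m.factorial) := by ring

lemma fact_upper (k : ℕ) (hk : 1 ≤ k) :
    (Nat.factorial k : ℝ) * Real.exp k ≤ Real.exp 1 * k * (k:ℝ)^k := by
  induction k with
  | zero => omega
  | succ m ih =>
    rcases Nat.eq_zero_or_pos m with hm | hm
    · subst hm; norm_num
    · have ihm := ih hm
      have hfac : (Nat.factorial (m+1) : ℝ) = ((m:ℝ)+1) * m.factorial := by
        rw [Nat.factorial_succ]; push_cast; ring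
      have hexp : Real.exp ((m:ℕ)+1:ℝ) = Real.exp 1 * Real.exp m := by
        rw [← Real.exp_add]; ring_nf
      have key : Real.exp 1 * (m:ℝ)^(m+1) ≤ ((m:ℝ)+1)^(m+1) := aux_exp_le m hm
      push_cast [hfac, hexp]
      calc ((m:ℝ)+1) * ↑m.factorial * (Real.exp 1 * Real.exp m)
          = Real.exp 1 * (((m:ℝ)+1) * (↑m.factorial * Real.exp m)) := by ring
        _ ≤ Real.exp 1 * (((m:ℝ)+1) * (Real.exp 1 * m * (m:ℝ)^m)) := by
            apply mul_le_mul_of_nonneg_left _ (Real.exp_pos 1).le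
            exact mul_le_mul_of_nonneg_left ihm (by positivity)
        _ = Real.exp 1 * ((m:ℝ)+1) * (Real.exp 1 * (m:ℝ)^(m+1)) := by rw [pow_succ]; ring
        _ ≤ Real.exp 1 * ((m:ℝ)+1) * ((m:ℝ)+1)^(m+1) :=
            mul_le_mul_of_nonneg_left key (by positivity)

lemma tendsto_aux (c : ℝ) :
    Tendsto (fun s : ℕ => (Real.exp 1 * s) ^ (c/(s:ℝ))) atTop (𝓝 1) := by
  have hlog : Tendsto (fun s : ℕ => Real.log s / (s:ℝ)) atTop (𝓝 0) :=
    (Real.isLittleO_log_id_atTop.tendsto_div_nhds_zero).comp tendsto_natCast_atTop_atTop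
  have hone : Tendsto (fun s : ℕ => 1/(s:ℝ)) atTop (𝓝 0) := tendsto_one_div_atTop_nhds_zero_nat
  have hinner : Tendsto (fun s : ℕ => c/(s:ℝ) * Real.log (Real.exp 1 * s)) atTop (𝓝 0) := by
    have h1 : Tendsto (fun s : ℕ => c * (1/(s:ℝ)) + c * (Real.log s / s)) atTop (𝓝 0) := by
      have := (hone.const_mul c).add (hlog.const_mul c)
      simpa using this
    apply h1.congr'
    filter_upwards [eventually_ge_atTop 1] with s hs
    have hs0 : (0:ℝ) < s := by exact_mod_cast hs
    rw [Real.log_mul (Real.exp_ne_zero 1) (ne_of_gt hs0), Real.log_exp]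
    field_simp
  have hexp : Tendsto (fun s : ℕ => Real.exp (c/(s:ℝ) * Real.log (Real.exp 1 * s))) atTop (𝓝 1) := by
    have := (Real.continuous_exp.tendsto 0).comp hinner
    simpa [Function.comp_def] using this
  apply hexp.congr'
  filter_upwards [eventually_ge_atTop 1] with s hs
  have hs0 : (0:ℝ) < Real.exp 1 * s := by
    have : (0:ℝ) < s := by exact_mod_cast hs
    positivity
  rw [Real.rpow_def_of_pos hs0]
  ring_nf

theorem stmt3 {n : ℕ} :
    ∀ ε > (0 : ℝ), ∃ N : ℕ, ∀ k : Fin n → ℕ, N ≤ ∑ i, k i →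
      |((((∏ i, (Nat.factorial (k i) : ℝ)) / (Nat.factorial (∑ i, k i) : ℝ)) /
            ((∏ i, ((k i : ℝ)) ^ (k i)) / (((∑ i, k i : ℕ) : ℝ)) ^ (∑ i, k i))) ^
          ((1 : ℝ) / ((∑ i, k i : ℕ) : ℝ))) - 1| < ε := by
  intro ε hε
  obtain ⟨N₁, hN₁⟩ := (Metric.tendsto_atTop.mp (tendsto_aux (n:ℝ)) ε hε)
  obtain ⟨N₂, hN₂⟩ := (Metric.tendsto_atTop.mp (tendsto_aux (-1:ℝ)) ε hε)
  refine ⟨max (max N₁ N₂) 1, fun k hk => ?_⟩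
  set s : ℕ := ∑ i, k i with hs_def
  have hs1 : 1 ≤ s := le_trans (le_max_right _ 1) hk
  have hs0 : (0:ℝ) < s := by exact_mod_cast hs1
  set E : ℝ := Real.exp 1 with hE
  have hE1 : (1:ℝ) ≤ E := by
    have := Real.add_one_le_exp (1:ℝ); simp only [hE]; linarith
  have hEs : (0:ℝ) < E * s := by positivity
  have hs0' : (1:ℝ) ≤ s := by exact_mod_cast hs1
  have hEs1 : (1:ℝ) ≤ E * s := by nlinarith
  set A : ℝ := ∏ i, (Nat.factorial (k i) : ℝ) with hA_def
  set B : ℝ := ∏ i, ((k i : ℝ)) ^ (k i) with hB_def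
  set F : ℝ := (Nat.factorial s : ℝ) with hF_def
  set S : ℝ := ((s:ℕ):ℝ) ^ s with hS_def
  have hApos : 0 < A := Finset.prod_pos fun i _ => by exact_mod_cast (k i).factorial_pos
  have hBpos : 0 < B := Finset.prod_pos fun i _ => by
    rcases Nat.eq_zero_or_pos (k i) with h | h
    · rw [h]; norm_num
    · have : (0:ℝ) < k i := by exact_mod_cast h
      positivity
  have hFpos : 0 < F := by rw [hF_def]; exact_mod_cast s.factorial_pos
  have hSpos : 0 < S := by positivity
  set X : ℝ := Real.exp (-(s:ℝ)) with hX
  have hXpos : 0 < X := Real.exp_pos _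
  -- per-index bounds
  have hA_low : B * X ≤ A := by
    have : ∏ i, (((k i:ℝ))^(k i) * Real.exp (-((k i:ℕ):ℝ))) ≤ A := by
      apply Finset.prod_le_prod
      · intro i _
        rcases Nat.eq_zero_or_pos (k i) with h | h
        · rw [h]; positivity
        · have : (0:ℝ) < k i := by exact_mod_cast h
          positivity
      · intro i _
        have h1 := fact_lower (k i)
        have h2 := Real.exp_pos ((k i:ℕ):ℝ)
        have h3 : Real.exp (-((k i:ℕ):ℝ)) = (Real.exp ((k i:ℕ):ℝ))⁻¹ := by
          rw [← Real.exp_neg]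
        rw [h3]
        rw [mul_inv_le_iff₀ h2]
        calc ((k i:ℝ))^(k i) ≤ Real.exp (k i) * (Nat.factorial (k i)) := h1
          _ = (Nat.factorial (k i) : ℝ) * Real.exp (k i) := by ring
    calc B * X = ∏ i, (((k i:ℝ))^(k i) * Real.exp (-((k i:ℕ):ℝ))) := by
          rw [Finset.prod_mul_distrib, ← Real.exp_sum]
          congr 1
          rw [hX]
          congr 1
          rw [Finset.sum_neg_distrib, neg_inj, hs_def, Nat.cast_sum]
      _ ≤ A := this
  have hA_up : A ≤ (E*s)^n * X * B := by
    have key : ∀ i : Fin n, (Nat.factorial (k i) : ℝ) ≤ (E*s) * (Real.exp (-((k i:ℕ):ℝ)) * ((k i:ℝ))^(k i)) := by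
      intro i
      rcases Nat.eq_zero_or_pos (k i) with h | h
      · rw [h]; norm_num; nlinarith
      · have hki : (0:ℝ) < k i := by exact_mod_cast h
        have hksum : (k i : ℝ) ≤ s := by
          exact_mod_cast Finset.single_le_sum (f := fun i => k i) (fun i _ => Nat.zero_le _) (Finset.mem_univ i)
        have h1 := fact_upper (k i) h
        have hexpi := Real.exp_pos ((k i:ℕ):ℝ)
        rw [Real.exp_neg, show E*(s:ℝ) * ((Real.exp ((k i:ℕ):ℝ))⁻¹ * ((k i:ℝ))^(k i)) =
            (E*(s:ℝ)*((k i:ℝ))^(k i)) / Real.exp ((k i:ℕ):ℝ) from by ring, le_div_iff₀ hexpi]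
        calc (Nat.factorial (k i) : ℝ) * Real.exp (k i) ≤ E * (k i) * ((k i:ℝ))^(k i) := h1
          _ ≤ E * s * ((k i:ℝ))^(k i) := by
              apply mul_le_mul_of_nonneg_right _ (by positivity)
              apply mul_le_mul_of_nonneg_left hksum (by positivity)
    calc A ≤ ∏ i, ((E*s) * (Real.exp (-((k i:ℕ):ℝ)) * ((k i:ℝ))^(k i))) := by
          apply Finset.prod_le_prod
          · intro i _; positivity
          · intro i _; exact key i
      _ = (∏ _i : Fin n, (E*(s:ℝ))) * ∏ i, (Real.exp (-((k i:ℕ):ℝ)) * ((k i:ℝ))^(k i)) :=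
          Finset.prod_mul_distrib
      _ = (E*(s:ℝ))^n * ((∏ i, Real.exp (-((k i:ℕ):ℝ))) * B) := by
          rw [Finset.prod_const, Finset.card_univ, Fintype.card_fin, Finset.prod_mul_distrib]
      _ = (E*s)^n * X * B := by
          have hprod : ∏ i, Real.exp (-((k i:ℕ):ℝ)) = X := by
            rw [← Real.exp_sum, hX]
            congr 1
            rw [Finset.sum_neg_distrib, neg_inj, hs_def, Nat.cast_sum]
          rw [hprod]; ring
  have hF_up : F ≤ E * s * X * S := by
    have h1 := fact_upper s hs1
    have hexps := Real.exp_pos ((s:ℕ):ℝ)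
    rw [hX]
    rw [Real.exp_neg]
    have : F * Real.exp (s:ℝ) ≤ E * s * S := h1
    calc F = F * Real.exp (s:ℝ) * (Real.exp (s:ℝ))⁻¹ := by field_simp
      _ ≤ E * s * S * (Real.exp (s:ℝ))⁻¹ := by
          apply mul_le_mul_of_nonneg_right this (by positivity)
      _ = E * s * (Real.exp (s:ℝ))⁻¹ * S := by ring
  have hF_low : S * X ≤ F := by
    have h1 := fact_lower s
    have hexps := Real.exp_pos ((s:ℕ):ℝ)
    rw [hX, Real.exp_neg, mul_inv_le_iff₀ hexps]
    calc S ≤ Real.exp (s:ℝ) * F := h1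
      _ = F * Real.exp (s:ℝ) := by ring
  -- ratio bounds
  set r : ℝ := (A / F) / (B / S) with hr_def
  have hr_eq : r = (A * S) / (F * B) := by
    rw [hr_def]
    field_simp
  have hr_low : 1 / (E * s) ≤ r := by
    rw [hr_eq, div_le_div_iff₀ hEs (by positivity)]
    calc 1 * (F * B) = F * B := by ring
      _ ≤ (E * s * X * S) * B := mul_le_mul_of_nonneg_right hF_up hBpos.le
      _ = (E * s) * (S * (B * X)) := by ring
      _ ≤ (E * s) * (S * A) := by
          apply mul_le_mul_of_nonneg_left _ hEs.le
          exact mul_le_mul_of_nonneg_left hA_low hSpos.le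
      _ = A * S * (E * s) := by ring
  have hr_up : r ≤ (E * s)^n := by
    rw [hr_eq, div_le_iff₀ (by positivity)]
    calc A * S ≤ ((E*s)^n * X * B) * S := mul_le_mul_of_nonneg_right hA_up hSpos.le
      _ = (E*s)^n * (B * (S * X)) := by ring
      _ ≤ (E*s)^n * (B * F) := by
          apply mul_le_mul_of_nonneg_left _ (by positivity)
          exact mul_le_mul_of_nonneg_left hF_low hBpos.le
      _ = (E*s)^n * (F * B) := by ring
  have hr_pos : 0 < r := lt_of_lt_of_le (by positivity) hr_low
  -- rpow bounds
  have hup : r ^ ((1:ℝ)/(s:ℝ)) ≤ (E*s) ^ ((n:ℝ)/(s:ℝ)) := by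
    calc r ^ ((1:ℝ)/(s:ℝ)) ≤ ((E*s)^n : ℝ) ^ ((1:ℝ)/(s:ℝ)) :=
          Real.rpow_le_rpow hr_pos.le hr_up (by positivity)
      _ = (E*s) ^ ((n:ℝ)/(s:ℝ)) := by
          rw [← Real.rpow_natCast (E*s) n, ← Real.rpow_mul hEs.le, mul_one_div]
  have hlow : (E*s) ^ ((-1:ℝ)/(s:ℝ)) ≤ r ^ ((1:ℝ)/(s:ℝ)) := by
    have h1 : ((1:ℝ)/(E*s)) ^ ((1:ℝ)/(s:ℝ)) ≤ r ^ ((1:ℝ)/(s:ℝ)) :=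
      Real.rpow_le_rpow (by positivity) hr_low (by positivity)
    have h2 : ((1:ℝ)/(E*s)) ^ ((1:ℝ)/(s:ℝ)) = (E*s) ^ ((-1:ℝ)/(s:ℝ)) := by
      rw [one_div, ← Real.rpow_neg_one (E*(s:ℝ)), ← Real.rpow_mul hEs.le]
      congr 1
      ring
    rwa [h2] at h1
  -- conclude
  have hU := hN₁ s (le_trans (le_max_left N₁ N₂) (le_trans (le_max_left _ 1) hk))
  have hL := hN₂ s (le_trans (le_max_right N₁ N₂) (le_trans (le_max_left _ 1) hk))
  rw [Real.dist_eq, abs_sub_lt_iff] at hU hL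
  rw [abs_sub_lt_iff]
  constructor
  · calc r ^ ((1:ℝ)/(s:ℝ)) - 1 ≤ (E*s) ^ ((n:ℝ)/(s:ℝ)) - 1 := by linarith
      _ < ε := hU.1
  · calc 1 - r ^ ((1:ℝ)/(s:ℝ)) ≤ 1 - (E*s) ^ ((-1:ℝ)/(s:ℝ)) := by linarith
      _ < ε := hL.2
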